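/- Let K be a field with a ring topology τ and let S be a τ-bounded, τ-open subring of K with S ≠ K. Then τ equals the S-adic topology on K. -/

import Mathlib

open Topology

/-- The collection `{aS + b : a ∈ K^×, b ∈ K}`, a basis for the `S`-adic topology. -/
def adicBasis {K : Type*} [Field K] (S : Subring K) : Set (Set K) :=
  {s | ∃ a b : K, a ≠ 0 ∧ s = {x | ∃ r ∈ S, x = a * r + b}}

/-- The `S`-adic topology on `K`: the topology with basis `{aS + b : a ∈ K^×, b ∈ K}`. -/
def adicTopology {K : Type*} [Field K] (S : Subring K) : TopologicalSpace K :=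
  TopologicalSpace.generateFrom (adicBasis S)

/-- Let `K` be a field with a ring topology `τ` and let `S` be a `τ`-bounded,
`τ`-open subring of `K` with `S ≠ K`. Then `τ` equals the `S`-adic topology on `K`. -/
theorem statement18 {K : Type*} [Field K] [t : TopologicalSpace K]
    [IsTopologicalRing K] [T2Space K]
    (hnd : ¬ DiscreteTopology K)
    (S : Subring K) (hS : S ≠ ⊤)
    (hopen : IsOpen (S : Set K))
    (hbdd : ∀ U ∈ nhds (0 : K), ∃ V ∈ nhds (0 : K), ∀ v ∈ V, ∀ b ∈ (S : Set K), v * b ∈ U) :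
    t = adicTopology S := by
  -- every τ-neighbourhood of 0 contains a set a·S with a ≠ 0
  have key : ∀ U ∈ nhds (0 : K), ∃ a : K, a ≠ 0 ∧ ∀ r ∈ S, a * r ∈ U := by
    intro U hU
    obtain ⟨V, hV, hVS⟩ := hbdd U hU
    have hne : ∃ a ∈ V, a ≠ 0 := by
      by_contra h
      push_neg at h
      apply hnd
      rw [discreteTopology_iff_isOpen_singleton_zero]
      obtain ⟨W, hWV, hWo, hW0⟩ := mem_nhds_iff.mp hV
      have : W = {0} := Set.eq_singleton_iff_unique_mem.mpr
        ⟨hW0, fun x hx => h x (hWV hx)⟩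
      exact this ▸ hWo
    obtain ⟨a, haV, ha⟩ := hne
    exact ⟨a, ha, fun r hr => hVS a haV r hr⟩
  refine le_antisymm (le_generateFrom ?_) ?_
  · rintro s ⟨a, b, ha, rfl⟩
    have hset : {x : K | ∃ r ∈ S, x = a * r + b} = (fun x => (x - b) * a⁻¹) ⁻¹' S := by
      ext x
      simp only [Set.mem_setOf_eq, Set.mem_preimage, SetLike.mem_coe]
      constructor
      · rintro ⟨r, hr, rfl⟩
        have : (a * r + b - b) * a⁻¹ = r := by field_simp; ring
        rwa [this]
      · intro hx
        exact ⟨(x - b) * a⁻¹, hx, by field_simp; ring⟩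
    rw [hset]
    exact hopen.preimage ((continuous_id.sub continuous_const).mul continuous_const)
  · intro U hU
    have hbasic : ∀ x ∈ U, ∃ s ∈ adicBasis S, x ∈ s ∧ s ⊆ U := by
      intro x hx
      have hW : (fun y : K => y + x) ⁻¹' U ∈ nhds (0 : K) := by
        have hc : Continuous (fun y : K => y + x) := continuous_id.add continuous_const
        have : (fun y : K => y + x) ⁻¹' U ∈ nhds ((0 : K)) := by
          apply hc.continuousAt.preimage_mem_nhds
          simpa using hU.mem_nhds hx
        exact this
      obtain ⟨a, ha, haS⟩ := key _ hW
      refine ⟨{y | ∃ r ∈ S, y = a * r + x}, ⟨a, x, ha, rfl⟩, ⟨0, S.zero_mem, by ring⟩, ?_⟩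
      rintro y ⟨r, hr, rfl⟩
      exact haS r hr
    have hUnion : U = ⋃₀ {s | s ∈ adicBasis S ∧ s ⊆ U} := by
      apply Set.Subset.antisymm
      · intro x hx
        obtain ⟨s, hs, hxs, hsU⟩ := hbasic x hx
        exact ⟨s, ⟨hs, hsU⟩, hxs⟩
      · rintro x ⟨s, ⟨_, hsU⟩, hxs⟩
        exact hsU hxs
    rw [hUnion]
    exact TopologicalSpace.GenerateOpen.sUnion _
      (fun s hs => TopologicalSpace.GenerateOpen.basic s hs.1)
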